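/- Let f(x) = max_{j∈[N]} log(Σ_{a∈A_j} f_{a,j} exp(aᵀx)) with finite sets A_j ⊂ ℝⁿ and positive coefficients. Then f is coercive (all sublevel sets compact) if and only if the convex hull of ∪_j A_j contains a neighborhood of the origin 0 in ℝⁿ. -/

import Mathlib

open Real Finset

/-- Linearity of `fun z => ∑ i, z i * x i`. -/
lemma aux_lin {n : ℕ} (x : Fin n → ℝ) :
    IsLinearMap ℝ (fun z : Fin n → ℝ => ∑ i, z i * x i) := by
  constructor
  · intro y z; simp [add_mul, Finset.sum_add_distrib]
  · intro s y; simp [Finset.mul_sum, smul_eq_mul, mul_assoc]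

/-- Representation of a continuous linear functional on `Fin n → ℝ`. -/
lemma aux_rep {n : ℕ} (φ : (Fin n → ℝ) →L[ℝ] ℝ) (y : Fin n → ℝ) :
    φ y = ∑ i, y i * φ (fun j => if i = j then 1 else 0) := by
  conv_lhs => rw [pi_eq_sum_univ y]
  rw [map_sum]
  simp [smul_eq_mul]

/-- If the convex hull of a finite set is not a neighborhood of `0`, there is a
nonzero direction `u` with `⟪a, u⟫ ≤ 0` for all `a ∈ S`. -/
lemma aux_sep {n : ℕ} (S : Finset (Fin n → ℝ)) (hSne : S.Nonempty)
    (hK : convexHull ℝ (S : Set (Fin n → ℝ)) ∉ nhds (0 : Fin n → ℝ)) :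
    ∃ u : Fin n → ℝ, u ≠ 0 ∧ ∀ a ∈ S, ∑ i, a i * u i ≤ 0 := by
  set K := convexHull ℝ (S : Set (Fin n → ℝ)) with hKdef
  rcases Nat.eq_zero_or_pos n with hn | hn
  · exfalso
    apply hK
    subst hn
    haveI : Subsingleton (Fin 0 → ℝ) := ⟨fun a b => funext fun i => absurd i.2 (by omega)⟩
    obtain ⟨a, ha⟩ := hSne
    have haK : a ∈ K := subset_convexHull ℝ _ (by exact_mod_cast ha)
    have : K = Set.univ := Set.eq_univ_of_forall fun y => by
      rwa [Subsingleton.elim y a]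
    rw [this]; exact Filter.univ_mem
  · haveI : Nonempty (Fin n) := ⟨⟨0, hn⟩⟩
    set h : (Fin n → ℝ) → ℝ := fun u => S.sup' hSne fun a => ∑ i, a i * u i with hhdef
    have hcont : Continuous h := by
      exact Continuous.finset_sup'_apply hSne fun a _ =>
        continuous_finset_sum _ fun i _ => (continuous_const.mul (continuous_apply i))
    have hsphere : IsCompact (Metric.sphere (0 : Fin n → ℝ) 1) := isCompact_sphere _ _
    have hsne : (Metric.sphere (0 : Fin n → ℝ) 1).Nonempty :=
      NormedSpace.sphere_nonempty.2 zero_le_one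
    obtain ⟨u0, hu0s, hu0min⟩ := hsphere.exists_isMinOn hsne hcont.continuousOn
    have hu0norm : ‖u0‖ = 1 := by simpa using hu0s
    rcases le_or_gt (h u0) 0 with hm | hm
    · refine ⟨u0, ?_, fun a ha => le_trans (Finset.le_sup' (fun a => ∑ i, a i * u0 i) ha) hm⟩
      intro h0; rw [h0] at hu0norm; simp at hu0norm
    · exfalso
      apply hK
      have hnpos : (0 : ℝ) < n := by exact_mod_cast hn
      refine Metric.mem_nhds_iff.2 ⟨h u0 / n, by positivity, ?_⟩
      intro x hx
      by_contra hxK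
      have hKconv : Convex ℝ K := convex_convexHull ℝ _
      have hKclosed : IsClosed K := (S.finite_toSet.isCompact_convexHull ℝ).isClosed
      obtain ⟨φ, r, hφ1, hφ2⟩ := geometric_hahn_banach_closed_point hKconv hKclosed hxK
      set v : Fin n → ℝ := fun i => φ (fun j => if i = j then 1 else 0) with hvdef
      have hrep : ∀ y, φ y = ∑ i, y i * v i := fun y => aux_rep φ y
      have hvne : v ≠ 0 := by
        intro h0
        obtain ⟨a, ha⟩ := hSne
        have haK : a ∈ K := subset_convexHull ℝ _ (by exact_mod_cast ha)
        have h1 := hφ1 a haK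
        have h2 : φ a = 0 := by rw [hrep, h0]; simp
        have h3 : φ x = 0 := by rw [hrep, h0]; simp
        rw [h2] at h1; rw [h3] at hφ2; linarith
      have hvpos : 0 < ‖v‖ := norm_pos_iff.2 hvne
      set w : Fin n → ℝ := ‖v‖⁻¹ • v with hwdef
      have hwnorm : ‖w‖ = 1 := by
        rw [hwdef, norm_smul, norm_inv, norm_norm, inv_mul_cancel₀ (ne_of_gt hvpos)]
      have hwmem : w ∈ Metric.sphere (0 : Fin n → ℝ) 1 := by simpa using hwnorm
      have hmin : h u0 ≤ h w := hu0min hwmem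
      obtain ⟨astar, hastar, hsup⟩ := Finset.exists_mem_eq_sup' hSne
        (fun a => ∑ i, a i * w i)
      have hipw : ∀ y : Fin n → ℝ, (∑ i, y i * w i) = ‖v‖⁻¹ * ∑ i, y i * v i := by
        intro y
        rw [Finset.mul_sum]
        exact Finset.sum_congr rfl fun i _ => by
          simp [hwdef, smul_eq_mul]; ring
      have hlt : (∑ i, astar i * w i) < ∑ i, x i * w i := by
        rw [hipw astar, hipw x, ← hrep, ← hrep]
        have := hφ1 astar (subset_convexHull ℝ _ (by exact_mod_cast hastar))
        have := hφ2
        have hinv : 0 < ‖v‖⁻¹ := by positivity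
        nlinarith
      have hbound : (∑ i, x i * w i) < h u0 := by
        have hxlt : ‖x‖ < h u0 / n := by simpa using hx
        calc (∑ i, x i * w i) ≤ ∑ i : Fin n, ‖x‖ * 1 := by
              apply Finset.sum_le_sum
              intro i _
              calc x i * w i ≤ |x i * w i| := le_abs_self _
                _ = |x i| * |w i| := abs_mul _ _
                _ ≤ ‖x‖ * 1 := by
                    apply mul_le_mul (norm_le_pi_norm x i) ?_ (abs_nonneg _) (norm_nonneg _)
                    calc |w i| ≤ ‖w‖ := norm_le_pi_norm w i
                      _ = 1 := hwnorm
          _ = n * ‖x‖ := by simp [mul_comm]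
          _ < n * (h u0 / n) := by
              apply mul_lt_mul_of_pos_left hxlt hnpos
          _ = h u0 := by field_simp
      have : h u0 ≤ ∑ i, astar i * w i := by rw [← hsup]; exact hmin
      linarith

open Real Finset

lemma aux_lin' {n : ℕ} (x : Fin n → ℝ) :
    IsLinearMap ℝ (fun z : Fin n → ℝ => ∑ i, z i * x i) := by
  constructor
  · intro y z; simp [add_mul, Finset.sum_add_distrib]
  · intro s y; simp [Finset.mul_sum, smul_eq_mul, mul_assoc]

/-- If the convex hull of `S` contains the closed ball of radius `ε`, then for every `x`
some element of `S` has inner product with `x` at least `ε * ‖x‖`. -/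
lemma aux_ball {n : ℕ} (S : Finset (Fin n → ℝ)) (hSne : S.Nonempty) {ε : ℝ} (hε : 0 < ε)
    (hball : Metric.closedBall (0 : Fin n → ℝ) ε ⊆ convexHull ℝ (S : Set (Fin n → ℝ)))
    (x : Fin n → ℝ) : ∃ a ∈ S, ε * ‖x‖ ≤ ∑ i, a i * x i := by
  set M := S.sup' hSne (fun a => ∑ i, a i * x i) with hM
  obtain ⟨astar, hastar, hsup⟩ := Finset.exists_mem_eq_sup' hSne (fun a => ∑ i, a i * x i)
  refine ⟨astar, hastar, ?_⟩
  rw [← hsup]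
  rcases eq_or_ne x 0 with rfl | hx
  · simp
  · have hxpos : 0 < ‖x‖ := norm_pos_iff.2 hx
    set y : Fin n → ℝ := (ε / ‖x‖) • x with hy
    have hynorm : ‖y‖ = ε := by
      rw [hy, norm_smul, Real.norm_eq_abs, abs_of_pos (by positivity), div_mul_cancel₀]
      exact ne_of_gt hxpos
    have hyK : y ∈ convexHull ℝ (S : Set (Fin n → ℝ)) :=
      hball (by simp [Metric.mem_closedBall, hynorm])
    have hhalf : convexHull ℝ (S : Set (Fin n → ℝ)) ⊆ {z | (∑ i, z i * x i) ≤ M} := by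
      apply convexHull_min
      · intro b hb
        rw [Finset.mem_coe] at hb
        exact Finset.le_sup' (fun a => ∑ i, a i * x i) hb
      · exact convex_halfSpace_le (aux_lin' x) M
    have hyM : (∑ i, y i * x i) ≤ M := hhalf hyK
    have hylb : ε * ‖x‖ ≤ ∑ i, y i * x i := by
      have hsq : ‖x‖ ^ 2 ≤ ∑ i, x i * x i := by
        have hne : ∃ i, x i ≠ 0 := by
          by_contra hcon
          push_neg at hcon
          exact hx (funext hcon)
        haveI : Nonempty (Fin n) := ⟨hne.choose⟩
        obtain ⟨i0, _, hi0⟩ := Finset.exists_max_image Finset.univ (fun i => |x i|)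
          Finset.univ_nonempty
        have hxle : ‖x‖ ≤ |x i0| := by
          apply pi_norm_le_iff_of_nonneg (abs_nonneg _) |>.2
          intro i
          exact hi0 i (Finset.mem_univ i)
        calc ‖x‖ ^ 2 ≤ |x i0| ^ 2 := by
              apply pow_le_pow_left₀ (norm_nonneg x) hxle
          _ = x i0 * x i0 := by rw [sq_abs]; ring
          _ ≤ ∑ i, x i * x i := Finset.single_le_sum (fun i _ => mul_self_nonneg (x i))
              (Finset.mem_univ i0)
      have : (∑ i, y i * x i) = (ε / ‖x‖) * ∑ i, x i * x i := by
        rw [Finset.mul_sum]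
        exact Finset.sum_congr rfl fun i _ => by simp [hy, smul_eq_mul]; ring
      rw [this]
      calc ε * ‖x‖ = (ε / ‖x‖) * ‖x‖ ^ 2 := by field_simp
        _ ≤ (ε / ‖x‖) * ∑ i, x i * x i := by
            apply mul_le_mul_of_nonneg_left hsq (by positivity)
    linarith


set_option maxHeartbeats 1000000 in
theorem stmt1 {n N : ℕ} (hN : 1 ≤ N)
    (A : Fin N → Finset (Fin n → ℝ)) (hA : ∀ j, (A j).Nonempty)
    (c : Fin N → (Fin n → ℝ) → ℝ) (hc : ∀ j, ∀ a ∈ A j, 0 < c j a)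
    (f : (Fin n → ℝ) → ℝ)
    (hf : ∀ x, IsGreatest
      {t | ∃ j : Fin N,
        t = Real.log (∑ a ∈ A j, c j a * Real.exp (∑ i, a i * x i))} (f x)) :
    (∀ t : ℝ, IsCompact {x | f x ≤ t}) ↔
      convexHull ℝ (⋃ j, (A j : Set (Fin n → ℝ))) ∈ nhds (0 : Fin n → ℝ) := by
  classical
  set S : Finset (Fin n → ℝ) := Finset.univ.biUnion A with hSdef
  have hSne : S.Nonempty := by
    obtain ⟨a, ha⟩ := hA ⟨0, hN⟩
    exact ⟨a, Finset.mem_biUnion.2 ⟨⟨0, hN⟩, Finset.mem_univ _, ha⟩⟩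
  have hSset : (⋃ j, (A j : Set (Fin n → ℝ))) = ↑S := by
    rw [hSdef]; simp
  rw [hSset]
  have hNne : (Finset.univ : Finset (Fin N)).Nonempty := ⟨⟨0, hN⟩, Finset.mem_univ _⟩
  set g : Fin N → (Fin n → ℝ) → ℝ :=
    fun j x => Real.log (∑ a ∈ A j, c j a * Real.exp (∑ i, a i * x i)) with hgdef
  have hfg : ∀ x, ∃ j, f x = g j x := fun x => (hf x).1
  have hgle : ∀ x j, g j x ≤ f x := fun x j => (hf x).2 ⟨j, rfl⟩
  have hsum_pos : ∀ j (x : Fin n → ℝ),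
      0 < ∑ a ∈ A j, c j a * Real.exp (∑ i, a i * x i) := fun j x =>
    Finset.sum_pos (fun a ha => mul_pos (hc j a ha) (Real.exp_pos _)) (hA j)
  constructor
  · intro hcompact
    by_contra hK
    obtain ⟨u, hune, hu⟩ := aux_sep S hSne hK
    set t0 := Finset.univ.sup' hNne (fun j => Real.log (∑ a ∈ A j, c j a)) with ht0
    have hray : ∀ s : ℝ, 0 ≤ s → f (s • u) ≤ t0 := by
      intro s hs
      obtain ⟨j, hj⟩ := hfg (s • u)
      rw [hj]
      have hsum_le : (∑ a ∈ A j, c j a * Real.exp (∑ i, a i * (s • u) i))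
          ≤ ∑ a ∈ A j, c j a := by
        apply Finset.sum_le_sum
        intro a ha
        have hip : (∑ i, a i * (s • u) i) = s * ∑ i, a i * u i := by
          rw [Finset.mul_sum]
          exact Finset.sum_congr rfl fun i _ => by simp [smul_eq_mul]; ring
        have hexp : Real.exp (∑ i, a i * (s • u) i) ≤ 1 := by
          rw [Real.exp_le_one_iff, hip]
          exact mul_nonpos_of_nonneg_of_nonpos hs
            (hu a (Finset.mem_biUnion.2 ⟨j, Finset.mem_univ j, ha⟩))
        calc c j a * Real.exp (∑ i, a i * (s • u) i) ≤ c j a * 1 :=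
              mul_le_mul_of_nonneg_left hexp (hc j a ha).le
          _ = c j a := mul_one _
      calc g j (s • u) ≤ Real.log (∑ a ∈ A j, c j a) :=
            Real.log_le_log (hsum_pos j _) hsum_le
        _ ≤ t0 := Finset.le_sup' (fun j => Real.log (∑ a ∈ A j, c j a)) (Finset.mem_univ j)
    obtain ⟨R, hR⟩ := (hcompact t0).isBounded.subset_closedBall 0
    have hupos : 0 < ‖u‖ := norm_pos_iff.2 hune
    set s := (|R| + 1) / ‖u‖ with hsdef
    have hs0 : 0 ≤ s := by positivity
    have hmem : s • u ∈ {x | f x ≤ t0} := hray s hs0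
    have hle : ‖s • u‖ ≤ R := by
      have := hR hmem
      rwa [Metric.mem_closedBall, dist_zero_right] at this
    have hnorm : ‖s • u‖ = |R| + 1 := by
      rw [norm_smul, Real.norm_eq_abs, abs_of_nonneg hs0, hsdef,
        div_mul_cancel₀ _ (ne_of_gt hupos)]
    have := le_abs_self R
    rw [hnorm] at hle
    linarith
  · intro hK t
    obtain ⟨ε, hεpos, hball⟩ := Metric.mem_nhds_iff.1 hK
    have hball2 : Metric.closedBall (0 : Fin n → ℝ) (ε / 2) ⊆
        convexHull ℝ (S : Set (Fin n → ℝ)) :=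
      subset_trans (Metric.closedBall_subset_ball (by linarith)) hball
    have hcontg : ∀ j, Continuous (g j) := by
      intro j
      apply Continuous.log
      · exact continuous_finset_sum _ fun a _ => continuous_const.mul
          (Real.continuous_exp.comp (continuous_finset_sum _ fun i _ =>
            continuous_const.mul (continuous_apply i)))
      · intro x; exact ne_of_gt (hsum_pos j x)
    have hset : {x | f x ≤ t} = ⋂ j, {x | g j x ≤ t} := by
      ext x
      simp only [Set.mem_setOf_eq, Set.mem_iInter]
      constructor
      · intro h j; exact le_trans (hgle x j) h
      · intro h; obtain ⟨j, hj⟩ := hfg x; rw [hj]; exact h j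
    have hclosed : IsClosed {x | f x ≤ t} := by
      rw [hset]
      exact isClosed_iInter fun j => isClosed_le (hcontg j) continuous_const
    have hsig : (Finset.univ.sigma A).Nonempty := by
      obtain ⟨a, ha⟩ := hA ⟨0, hN⟩
      exact ⟨⟨⟨0, hN⟩, a⟩, Finset.mem_sigma.2 ⟨Finset.mem_univ _, ha⟩⟩
    set cmin := (Finset.univ.sigma A).inf' hsig (fun p => c p.1 p.2) with hcmin
    have hcminpos : 0 < cmin := by
      rw [hcmin, Finset.lt_inf'_iff]
      intro p hp
      exact hc p.1 p.2 (Finset.mem_sigma.1 hp).2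
    set R := max 0 ((t - Real.log cmin) / (ε / 2)) with hRdef
    have hsub : {x | f x ≤ t} ⊆ Metric.closedBall 0 R := by
      intro x hx
      rw [Metric.mem_closedBall, dist_zero_right]
      obtain ⟨a, haS, hax⟩ := aux_ball S hSne (by positivity : (0:ℝ) < ε / 2) hball2 x
      rw [hSdef] at haS
      obtain ⟨j, _, hj2⟩ := Finset.mem_biUnion.1 haS
      have h1 : Real.log cmin + (ε / 2) * ‖x‖ ≤ f x := by
        have hterm : c j a * Real.exp (∑ i, a i * x i)
            ≤ ∑ b ∈ A j, c j b * Real.exp (∑ i, b i * x i) :=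
          Finset.single_le_sum (f := fun b => c j b * Real.exp (∑ i, b i * x i))
            (fun b hb => le_of_lt (mul_pos (hc j b hb) (Real.exp_pos _))) hj2
        have h2 : Real.log (c j a * Real.exp (∑ i, a i * x i)) ≤ g j x :=
          Real.log_le_log (mul_pos (hc j a hj2) (Real.exp_pos _)) hterm
        rw [Real.log_mul (ne_of_gt (hc j a hj2)) (ne_of_gt (Real.exp_pos _)),
          Real.log_exp] at h2
        have hmemsig : (⟨j, a⟩ : (_ : Fin N) × (Fin n → ℝ)) ∈ Finset.univ.sigma A :=
          Finset.mem_sigma.2 ⟨Finset.mem_univ _, hj2⟩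
        have h3 : Real.log cmin ≤ Real.log (c j a) :=
          Real.log_le_log hcminpos (Finset.inf'_le (fun p => c p.1 p.2) hmemsig)
        have := hgle x j
        linarith
      have hxt : f x ≤ t := hx
      have h4 : ‖x‖ ≤ (t - Real.log cmin) / (ε / 2) := by
        rw [le_div_iff₀ (by positivity)]
        linarith
      exact le_trans h4 (le_max_right _ _)
    exact Metric.isCompact_of_isClosed_isBounded hclosed
      ((Metric.isBounded_closedBall).subset hsub)
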